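/- For any cooperative game (N, ν) with n players and any two distinct players i ≠ j, the covariance of the extended marginal contributions Δ'_i(S) and Δ'_j(S) when S is drawn from the CMCS distribution equals (1/(n+1)) · Σ_{S ⊆ N\{i}} Δ_i(S) · ( Δ'_j(S)/C(n,|S|) + Δ'_j(S ∪ {i})/C(n,|S|+1) ) − φ_i·φ_j, where the covariance is Cov(X,Y) = E[XY] − E[X]·E[Y] with expectations taken over the CMCS distribution. -/

import Mathlib

open Finset

lemma split_sum {ι : Type*} [Fintype ι] [DecidableEq ι] (i : ι) (g : Finset ι → ℝ) :
    ∑ S : Finset ι, g S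
      = ∑ S ∈ (Finset.univ.erase i).powerset, (g S + g (insert i S)) := by
  calc ∑ S : Finset ι, g S = ∑ S ∈ (Finset.univ : Finset ι).powerset, g S := by
        rw [Finset.powerset_univ]
    _ = ∑ S ∈ (insert i (Finset.univ.erase i)).powerset, g S := by
        rw [Finset.insert_erase (Finset.mem_univ i)]
    _ = ∑ S ∈ (Finset.univ.erase i).powerset, g S
        + ∑ S ∈ (Finset.univ.erase i).powerset, g (insert i S) :=
        Finset.sum_powerset_insert (Finset.notMem_erase i _) _
    _ = _ := by rw [Finset.sum_add_distrib]

lemma choose_arith (n s : ℕ) (h : s + 1 ≤ n) :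
    1 / (((n:ℝ)+1) * (n.choose s)) + 1 / (((n:ℝ)+1) * (n.choose (s+1)))
      = 1 / ((n:ℝ) * ((n-1).choose s)) := by
  have hn : 1 ≤ n := le_trans (Nat.le_add_left 1 s) h
  have h1 : (n+1) * n.choose s = (n+1).choose (s+1) * (s+1) := Nat.add_one_mul_choose_eq n s
  have h2 : n * (n-1).choose s = n.choose (s+1) * (s+1) := by
    have := Nat.add_one_mul_choose_eq (n-1) s
    rwa [Nat.sub_add_cancel hn] at this
  have hp : (n+1).choose (s+1) = n.choose s + n.choose (s+1) := Nat.choose_succ_succ n s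
  have ha : (0:ℝ) < n.choose s := by exact_mod_cast Nat.choose_pos (by omega)
  have hb : (0:ℝ) < n.choose (s+1) := by exact_mod_cast Nat.choose_pos h
  have hc : (0:ℝ) < (n-1).choose s := by exact_mod_cast Nat.choose_pos (by omega)
  have hn' : (0:ℝ) < (n:ℝ) := by exact_mod_cast hn
  have h1' : ((n:ℝ)+1) * n.choose s = ((n+1).choose (s+1) : ℝ) * (s+1) := by
    exact_mod_cast congrArg (Nat.cast : ℕ → ℝ) h1
  have h2' : (n:ℝ) * ((n-1).choose s : ℝ) = (n.choose (s+1) : ℝ) * (s+1) := by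
    exact_mod_cast congrArg (Nat.cast : ℕ → ℝ) h2
  have hp' : ((n+1).choose (s+1) : ℝ) = (n.choose s : ℝ) + n.choose (s+1) := by
    exact_mod_cast congrArg (Nat.cast : ℕ → ℝ) hp
  field_simp
  linear_combination (((n.choose s:ℝ)+(n.choose (s+1):ℝ)))*h2'
    - ((n.choose (s+1):ℝ))*h1'
    - ((n.choose (s+1):ℝ)*((s:ℝ)+1))*hp'

lemma card_bound {ι : Type*} [Fintype ι] [DecidableEq ι] {k : ι} {S : Finset ι}
    (hS : S ⊆ Finset.univ.erase k) : S.card + 1 ≤ Fintype.card ι := by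
  have := Finset.card_le_card hS
  rw [Finset.card_erase_of_mem (Finset.mem_univ k), Finset.card_univ] at this
  have : 1 ≤ Fintype.card ι := Fintype.card_pos_iff.mpr ⟨k⟩
  omega

lemma exp_eq {ι : Type*} [Fintype ι] [DecidableEq ι] (ν : Finset ι → ℝ) (k : ι) :
    (∑ S : Finset ι,
        (1 / (((Fintype.card ι : ℝ) + 1) * ((Fintype.card ι).choose S.card))) *
          (ν (insert k S) - ν (S.erase k)))
      = ∑ S ∈ (Finset.univ.erase k).powerset,
          (1 / ((Fintype.card ι : ℝ) * ((Fintype.card ι - 1).choose S.card))) *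
            (ν (insert k S) - ν S) := by
  rw [split_sum k]
  refine Finset.sum_congr rfl fun S hS => ?_
  rw [Finset.mem_powerset] at hS
  have hkS : k ∉ S := fun h => Finset.notMem_erase k _ (hS h)
  rw [Finset.erase_eq_of_notMem hkS, Finset.erase_insert hkS, Finset.insert_idem,
    Finset.card_insert_of_notMem hkS, ← add_mul,
    choose_arith (Fintype.card ι) S.card (card_bound hS)]

theorem cmcs_covariance
    {ι : Type*} [Fintype ι] [DecidableEq ι]
    (ν : Finset ι → ℝ) (hν : ν ∅ = 0) (i j : ι) (hij : i ≠ j) :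
    (∑ S : Finset ι,
        (1 / (((Fintype.card ι : ℝ) + 1) * ((Fintype.card ι).choose S.card))) *
          ((ν (insert i S) - ν (S.erase i)) * (ν (insert j S) - ν (S.erase j))))
      - (∑ S : Finset ι,
            (1 / (((Fintype.card ι : ℝ) + 1) * ((Fintype.card ι).choose S.card))) *
              (ν (insert i S) - ν (S.erase i))) *
        (∑ S : Finset ι,
            (1 / (((Fintype.card ι : ℝ) + 1) * ((Fintype.card ι).choose S.card))) *
              (ν (insert j S) - ν (S.erase j)))
      = (1 / ((Fintype.card ι : ℝ) + 1)) *
          (∑ S ∈ (Finset.univ.erase i).powerset,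
            (ν (insert i S) - ν S) *
              ((ν (insert j S) - ν (S.erase j)) / ((Fintype.card ι).choose S.card : ℝ) +
               (ν (insert j (insert i S)) - ν ((insert i S).erase j)) /
                 ((Fintype.card ι).choose (S.card + 1) : ℝ)))
        - (∑ S ∈ (Finset.univ.erase i).powerset,
              (1 / ((Fintype.card ι : ℝ) * ((Fintype.card ι - 1).choose S.card))) *
                (ν (insert i S) - ν S)) *
          (∑ S ∈ (Finset.univ.erase j).powerset,
              (1 / ((Fintype.card ι : ℝ) * ((Fintype.card ι - 1).choose S.card))) *
                (ν (insert j S) - ν S)) := by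
  rw [exp_eq ν i, exp_eq ν j]
  refine congrArg₂ (· - ·) ?_ rfl
  rw [split_sum i, Finset.mul_sum]
  refine Finset.sum_congr rfl fun S hS => ?_
  rw [Finset.mem_powerset] at hS
  have hiS : i ∉ S := fun h => Finset.notMem_erase i _ (hS h)
  rw [Finset.erase_eq_of_notMem hiS, Finset.erase_insert hiS, Finset.insert_idem,
    Finset.card_insert_of_notMem hiS]
  simp only [one_div, mul_inv]
  ring
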